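/- Let F_0 = { ±e_i : i ∈ ℕ } and, for j ≥ 1, F_j = { (1/m_{2j−1}²) Σ_{i∈I} ε_i e_i : I ⊂ ℕ finite, card I ≤ n_{2j−1}/2, ε_i ∈ {−1,1} }, and set F = ∪_{j≥0} F_j. Then for every block sequence (x_k)_{k∈ℕ} of nonzero elements of c₀₀, every j ≥ 0 and every δ > 0, there exists a vector x in the linear span of { x_k : k ∈ ℕ } such that sup{ f(x) : f ∈ F_j } < δ · sup{ f(x) : f ∈ F }. (Thus the family (F_j)_{j≥0} satisfies the saturation condition (C) in the definition of a James Tree Generating family.) -/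

import Mathlib

noncomputable section

/-- The sequence `m_j`: `m 1 = 2`, `m (j+1) = (m j)^5`, i.e. `m j = 2 ^ 5 ^ (j-1)`. -/
def mseq (j : ℕ) : ℕ := 2 ^ 5 ^ (j - 1)

/-- The sequence `n_j`: `n 1 = 4` and `n (j+1) = (5 n_j) ^ (3 · 5^j)`. -/
def nseq : ℕ → ℕ
  | 0 => 1
  | 1 => 4
  | (j + 2) => (5 * nseq (j + 1)) ^ (3 * 5 ^ (j + 1))

/-- `f < g` for finitely supported functions: every element of the support of `f` is
less than every element of the support of `g`. -/
def BlockLt (f g : ℕ →₀ ℝ) : Prop :=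
  ∀ a ∈ f.support, ∀ b ∈ g.support, a < b

/-- The action of `f ∈ c₀₀` on `x ∈ c₀₀`: `f(x) = ∑ k, f k * x k`. -/
def fapply (f x : ℕ →₀ ℝ) : ℝ := x.sum fun i v => f i * v

/-- The family `F_j`: `F_0 = {±e_i}` and, for `j ≥ 1`,
`F_j = {(1/m_{2j-1}²) ∑_{i ∈ I} ±e_i : I finite, card I ≤ n_{2j-1}/2}`. -/
def Ffam : ℕ → Set (ℕ →₀ ℝ)
  | 0 => {h | ∃ i : ℕ, h = Finsupp.single i 1 ∨ h = -(Finsupp.single i 1)}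
  | (j + 1) => {h | ∃ (I : Finset ℕ) (ε : ℕ → ℝ),
      I.card ≤ nseq (2 * (j + 1) - 1) / 2 ∧ (∀ i ∈ I, ε i = 1 ∨ ε i = -1) ∧
      h = ((mseq (2 * (j + 1) - 1) : ℝ) ^ 2)⁻¹ • ∑ i ∈ I, ε i • Finsupp.single i (1 : ℝ)}

/-- For every block sequence `(x k)` of nonzero elements of `c₀₀`,
every `j` and every `δ > 0`, there is a vector `y` in the linear span of the `x k`
with `sup {f(y) : f ∈ F_j} < δ · sup {f(y) : f ∈ F}`, where `F = ⋃ j, F_j`.  Thus the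
family `(F_j)` satisfies the saturation condition (C) of a James‑Tree‑Generating
family. -/
lemma fapply_eq (f y : ℕ →₀ ℝ) : fapply f y = ∑ i ∈ y.support, f i * y i := rfl

lemma fapply_single (i : ℕ) (y : ℕ →₀ ℝ) : fapply (Finsupp.single i (1:ℝ)) y = y i := by
  classical
  rw [fapply_eq]
  simp only [Finsupp.single_apply, ite_mul, one_mul, zero_mul, Finset.sum_ite_eq]
  split
  · rfl
  · next h => exact (Finsupp.notMem_support_iff.mp h).symm

lemma fapply_neg (f y : ℕ →₀ ℝ) : fapply (-f) y = - fapply f y := by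
  simp [fapply_eq, Finsupp.neg_apply, neg_mul, Finset.sum_neg_distrib]

lemma fapply_smul (c : ℝ) (f y : ℕ →₀ ℝ) : fapply (c • f) y = c * fapply f y := by
  rw [fapply_eq, fapply_eq, Finset.mul_sum]
  refine Finset.sum_congr rfl fun i _ => ?_
  simp [Finsupp.smul_apply, mul_assoc]

lemma fapply_finset_sum {α : Type*} (s : Finset α) (g : α → (ℕ →₀ ℝ)) (y : ℕ →₀ ℝ) :
    fapply (∑ i ∈ s, g i) y = ∑ i ∈ s, fapply (g i) y := by
  simp only [fapply_eq, Finsupp.finset_sum_apply, Finset.sum_mul]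
  exact Finset.sum_comm

lemma fapply_le_l1 (f y : ℕ →₀ ℝ) (h : ∀ i, |f i| ≤ 1) :
    fapply f y ≤ ∑ i ∈ y.support, |y i| := by
  rw [fapply_eq]
  refine Finset.sum_le_sum fun i _ => ?_
  calc f i * y i ≤ |f i * y i| := le_abs_self _
    _ = |f i| * |y i| := abs_mul _ _
    _ ≤ 1 * |y i| := mul_le_mul_of_nonneg_right (h i) (abs_nonneg _)
    _ = |y i| := one_mul _

lemma one_le_mseq_sq (r : ℕ) : (1:ℝ) ≤ ((mseq r : ℝ))^2 := by
  have : (1:ℕ) ≤ mseq r := Nat.one_le_two_pow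
  have h : (1:ℝ) ≤ (mseq r : ℝ) := by exact_mod_cast this
  nlinarith

lemma Ffam_coeff_le {j : ℕ} {f : ℕ →₀ ℝ} (hf : f ∈ Ffam j) (i : ℕ) : |f i| ≤ 1 := by
  classical
  cases j with
  | zero =>
    obtain ⟨i₀, h | h⟩ := hf <;> subst h <;>
      simp only [Finsupp.neg_apply, abs_neg, Finsupp.single_apply] <;> split <;> norm_num
  | succ j' =>
    obtain ⟨I, ε, hcard, hε, rfl⟩ := hf
    have hc : ((∑ i' ∈ I, ε i' • Finsupp.single i' (1:ℝ)) : ℕ →₀ ℝ) i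
        = if i ∈ I then ε i else 0 := by
      rw [Finsupp.finset_sum_apply]
      simp only [Finsupp.smul_apply, Finsupp.single_apply, smul_eq_mul, mul_ite, mul_one, mul_zero]
      exact Finset.sum_ite_eq' I i ε
    rw [Finsupp.smul_apply, hc, smul_eq_mul, abs_mul]
    have h1 : |(((mseq (2 * (j' + 1) - 1) : ℝ))^2)⁻¹| ≤ 1 := by
      rw [abs_inv, abs_of_nonneg (by positivity)]
      exact inv_le_one_of_one_le₀ (one_le_mseq_sq _)
    have h2 : |if i ∈ I then ε i else 0| ≤ 1 := by
      split
      · next h => rcases hε i h with h' | h' <;> rw [h'] <;> norm_num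
      · norm_num
    calc |(((mseq (2 * (j' + 1) - 1) : ℝ))^2)⁻¹| * |if i ∈ I then ε i else 0|
        ≤ 1 * 1 := mul_le_mul h1 h2 (abs_nonneg _) zero_le_one
      _ = 1 := one_mul 1

lemma block_order (x : ℕ → (ℕ →₀ ℝ)) (hx0 : ∀ k, x k ≠ 0)
    (hxblock : ∀ k, BlockLt (x k) (x (k + 1))) :
    ∀ k k', k < k' → ∀ a ∈ (x k).support, ∀ b ∈ (x k').support, a < b := by
  intro k k' hkk'
  induction k' with
  | zero => omega
  | succ n ih =>
    intro a ha b hb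
    rcases Nat.lt_succ_iff_lt_or_eq.mp hkk' with h | h
    · obtain ⟨c, hc⟩ := Finsupp.support_nonempty_iff.mpr (hx0 n)
      exact (ih h a ha c hc).trans (hxblock n c hc b hb)
    · subst h; exact hxblock k a ha b hb

lemma nseq_succ : ∀ r, 1 ≤ r → nseq (r+1) = (5 * nseq r) ^ (3 * 5 ^ r)
  | (j+1), _ => rfl

lemma nseq_lb (r : ℕ) (hr : 2 ≤ r) : 2 ^ (3 * 5 ^ (r-1)) ≤ nseq r := by
  induction r, hr using Nat.le_induction with
  | base =>
    have h : nseq 2 = 20 ^ 15 := by norm_num [nseq]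
    rw [h]
    norm_num
  | succ n hn ih =>
    rw [nseq_succ n (by omega)]
    have h1 : nseq n ^ (3 * 5^n) ≤ (5 * nseq n) ^ (3 * 5^n) :=
      Nat.pow_le_pow_left (Nat.le_mul_of_pos_left _ (by norm_num)) _
    have h2 : (2 ^ (3 * 5^(n-1))) ^ (3*5^n) ≤ nseq n ^ (3*5^n) := Nat.pow_le_pow_left ih _
    have hstep : 2 ^ (3 * 5 ^ (n+1-1)) ≤ (2 ^ (3 * 5^(n-1))) ^ (3 * 5^n) := by
      rw [← pow_mul]
      apply Nat.pow_le_pow_right (by norm_num)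
      have h3 : 1 ≤ 3 * 5^(n-1) := by have : 0 < 5^(n-1) := Nat.pow_pos (by norm_num); omega
      have : n + 1 - 1 = n := by omega
      rw [this]
      calc 3 * 5^n = 1 * (3 * 5^n) := (one_mul _).symm
        _ ≤ (3 * 5^(n-1)) * (3 * 5^n) := Nat.mul_le_mul_right _ h3
    exact hstep.trans (h2.trans h1)

lemma growth (C : ℝ) : ∃ l : ℕ,
    C * ((mseq (2*l+1) : ℝ))^2 < ((nseq (2*l+1) / 2 : ℕ) : ℝ) := by
  obtain ⟨M, hM⟩ := exists_nat_gt C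
  refine ⟨M + 1, ?_⟩
  set r := 2*(M+1)+1 with hr
  set e := 5 ^ (r-1) with he
  have hre : r - 1 < e := Nat.lt_pow_self (by norm_num)
  have he1 : 1 ≤ e := Nat.one_le_pow _ _ (by norm_num)
  have hMe : M + 1 < 2 ^ (e - 1) := by
    have h2 : M + 1 ≤ e - 1 := by omega
    calc M + 1 < 2^(M+1) := Nat.lt_two_pow_self
      _ ≤ 2^(e-1) := Nat.pow_le_pow_right (by norm_num) h2
  have hnat : (M+1) * mseq r ^ 2 ≤ nseq r / 2 := by
    have h1 : mseq r ^ 2 = 2 ^ (2*e) := by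
      rw [mseq, ← pow_mul]
      congr 1
      omega
    have h3 : (M+1) * 2^(2*e) ≤ 2^(e-1) * 2^(2*e) := Nat.mul_le_mul_right _ hMe.le
    have h4 : 2^(e-1) * 2^(2*e) = 2^(3*e - 1) := by rw [← pow_add]; congr 1; omega
    have h6 : 2^(3*e) ≤ nseq r := by
      have h := nseq_lb r (by omega)
      rwa [← he] at h
    have h7 : 2^(3*e-1) = 2^(3*e)/2 := by
      have hx : 2^(3*e) = 2^(3*e-1) * 2 := by rw [← pow_succ]; congr 1; omega
      rw [hx, Nat.mul_div_cancel _ (by norm_num)]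
    have h5 : 2^(3*e-1) ≤ nseq r / 2 := by
      rw [h7]; exact Nat.div_le_div_right h6
    rw [h1]
    exact h3.trans (h4 ▸ h5)
  have hm2 : (0:ℝ) < ((mseq r : ℝ))^2 := by
    have h0 : 0 < mseq r := Nat.pow_pos (by norm_num)
    have h0' : (0:ℝ) < (mseq r : ℝ) := by exact_mod_cast h0
    positivity
  have hcast : ((M+1 : ℕ) : ℝ) * ((mseq r : ℝ))^2 ≤ ((nseq r / 2 : ℕ) : ℝ) := by
    exact_mod_cast hnat
  calc C * ((mseq r:ℝ))^2 < ((M+1:ℕ):ℝ) * ((mseq r:ℝ))^2 := by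
        apply mul_lt_mul_of_pos_right _ hm2
        push_cast; linarith
    _ ≤ _ := hcast

def Bbound (j : ℕ) : ℝ :=
  max 1 (((nseq (2 * j - 1) / 2 : ℕ) : ℝ) * (((mseq (2 * j - 1) : ℝ)) ^ 2)⁻¹)

lemma one_le_Bbound (j : ℕ) : 1 ≤ Bbound j := le_max_left _ _

lemma Ffam_fapply_le (j : ℕ) (y : ℕ →₀ ℝ) (hy : ∀ i, |y i| ≤ 1) :
    ∀ f ∈ Ffam j, fapply f y ≤ Bbound j := by
  intro f hf
  cases j with
  | zero =>
    obtain ⟨i, h | h⟩ := hf <;> subst h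
    · rw [fapply_single]
      exact ((le_abs_self _).trans (hy i)).trans (one_le_Bbound 0)
    · rw [fapply_neg, fapply_single]
      exact ((neg_le_abs _).trans (hy i)).trans (one_le_Bbound 0)
  | succ j' =>
    obtain ⟨I, ε, hcard', hε, rfl⟩ := hf
    rw [fapply_smul, fapply_finset_sum]
    have hm2' : (0:ℝ) ≤ (((mseq (2*(j'+1)-1) : ℝ))^2)⁻¹ := by positivity
    have hsum : ∑ i ∈ I, fapply (ε i • Finsupp.single i 1) y ≤ (I.card : ℝ) := by
      calc ∑ i ∈ I, fapply (ε i • Finsupp.single i 1) y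
          ≤ ∑ i ∈ I, (1:ℝ) := by
            refine Finset.sum_le_sum fun i hi => ?_
            rw [fapply_smul, fapply_single]
            calc ε i * y i ≤ |ε i * y i| := le_abs_self _
              _ = |ε i| * |y i| := abs_mul _ _
              _ ≤ 1 * 1 := by
                  apply mul_le_mul _ (hy i) (abs_nonneg _) zero_le_one
                  rcases hε i hi with h|h <;> rw [h] <;> norm_num
              _ = 1 := one_mul 1
        _ = I.card := by simp
    calc ((mseq (2*(j'+1)-1):ℝ)^2)⁻¹ * ∑ i ∈ I, fapply (ε i • Finsupp.single i 1) y
        ≤ ((mseq (2*(j'+1)-1):ℝ)^2)⁻¹ * I.card := mul_le_mul_of_nonneg_left hsum hm2'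
      _ ≤ ((mseq (2*(j'+1)-1):ℝ)^2)⁻¹ * ((nseq (2*(j'+1)-1)/2 : ℕ):ℝ) := by
          apply mul_le_mul_of_nonneg_left _ hm2'
          exact_mod_cast hcard'
      _ = ((nseq (2*(j'+1)-1)/2 : ℕ):ℝ) * ((mseq (2*(j'+1)-1):ℝ)^2)⁻¹ := mul_comm _ _
      _ ≤ Bbound (j'+1) := le_max_right _ _

theorem statement19 (x : ℕ → (ℕ →₀ ℝ)) (hx0 : ∀ k, x k ≠ 0)
    (hxblock : ∀ k, BlockLt (x k) (x (k + 1)))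
    (j : ℕ) (δ : ℝ) (hδ : 0 < δ) :
    ∃ y ∈ Submodule.span ℝ (Set.range x),
      sSup ((fun f => fapply f y) '' Ffam j)
        < δ * sSup ((fun f => fapply f y) '' ⋃ i, Ffam i) := by
  classical
  have hsupp : ∀ k, (x k).support.Nonempty :=
    fun k => Finsupp.support_nonempty_iff.mpr (hx0 k)
  have horder := block_order x hx0 hxblock
  have hmax : ∀ k, ∃ b ∈ (x k).support, ∀ i ∈ (x k).support, |x k i| ≤ |x k b| :=
    fun k => (x k).support.exists_max_image (fun i => |x k i|) (hsupp k)
  choose a ha hamax using hmax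
  have haneq : ∀ k, x k (a k) ≠ 0 := fun k => Finsupp.mem_support_iff.mp (ha k)
  obtain ⟨l, hl⟩ := growth (Bbound j / δ)
  set r := 2 * l + 1 with hrdef
  set N := nseq r / 2 with hNdef
  set y : ℕ →₀ ℝ := ∑ k ∈ Finset.range N, (x k (a k))⁻¹ • x k with hydef
  have hm2 : (0:ℝ) < ((mseq r : ℝ))^2 := by
    have h0 : (0:ℕ) < mseq r := Nat.pow_pos (by norm_num)
    have h0' : (0:ℝ) < (mseq r:ℝ) := by exact_mod_cast h0
    positivity
  have hy_apply : ∀ i, y i = ∑ k ∈ Finset.range N, (x k (a k))⁻¹ * (x k i) := by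
    intro i
    rw [hydef, Finsupp.finset_sum_apply]
    simp [Finsupp.smul_apply, smul_eq_mul]
  have hx_zero : ∀ k k' i, k ≠ k' → i ∈ (x k).support → x k' i = 0 := by
    intro k k' i hne hi
    by_contra h
    have hi' : i ∈ (x k').support := Finsupp.mem_support_iff.mpr h
    rcases Nat.lt_or_ge k k' with h1 | h1
    · exact lt_irrefl i (horder k k' h1 i hi i hi')
    · have h2 : k' < k := by omega
      exact lt_irrefl i (horder k' k h2 i hi' i hi)
  have hy_on : ∀ k₀, k₀ < N → ∀ i ∈ (x k₀).support, y i = (x k₀ (a k₀))⁻¹ * x k₀ i := by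
    intro k₀ hk₀ i hi
    rw [hy_apply]
    apply Finset.sum_eq_single_of_mem k₀ (Finset.mem_range.mpr hk₀)
    intro k _ hne
    rw [hx_zero k₀ k i (fun h => hne h.symm) hi, mul_zero]
  have hy_a : ∀ k, k < N → y (a k) = 1 := by
    intro k hk
    rw [hy_on k hk (a k) (ha k), inv_mul_cancel₀ (haneq k)]
  have hy_abs : ∀ i, |y i| ≤ 1 := by
    intro i
    by_cases hex : ∃ k₀, k₀ < N ∧ i ∈ (x k₀).support
    · obtain ⟨k₀, hk₀, hi⟩ := hex
      rw [hy_on k₀ hk₀ i hi, abs_mul, abs_inv, ← div_eq_inv_mul,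
        div_le_one (abs_pos.mpr (haneq k₀))]
      exact hamax k₀ i hi
    · have h0 : y i = 0 := by
        rw [hy_apply]
        apply Finset.sum_eq_zero
        intro k hk
        have hxk : x k i = 0 := by
          by_contra h
          exact hex ⟨k, Finset.mem_range.mp hk, Finsupp.mem_support_iff.mpr h⟩
        rw [hxk, mul_zero]
      rw [h0]; norm_num
  have hy_span : y ∈ Submodule.span ℝ (Set.range x) := by
    rw [hydef]
    apply Submodule.sum_mem
    intro k _
    exact Submodule.smul_mem _ _ (Submodule.subset_span ⟨k, rfl⟩)
  refine ⟨y, hy_span, ?_⟩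
  -- the special functional
  set I₀ : Finset ℕ := (Finset.range N).image a with hI₀
  have hmono : ∀ k k', k < k' → a k < a k' :=
    fun k k' h => horder k k' h _ (ha k) _ (ha k')
  have hinj : Set.InjOn a (Finset.range N) := by
    intro u _ v _ huv
    by_contra h
    rcases Nat.lt_or_ge u v with h1 | h1
    · exact absurd huv (hmono u v h1).ne
    · exact absurd huv.symm (hmono v u (by omega)).ne
  set f₀ : ℕ →₀ ℝ := ((mseq (2 * (l + 1) - 1) : ℝ) ^ 2)⁻¹ •
      ∑ i ∈ I₀, (fun _ => (1:ℝ)) i • Finsupp.single i (1 : ℝ) with hf₀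
  have hidx : 2 * (l + 1) - 1 = r := by omega
  have hcard : I₀.card ≤ nseq (2 * (l + 1) - 1) / 2 := by
    rw [hidx]
    calc I₀.card ≤ (Finset.range N).card := Finset.card_image_le
      _ = N := Finset.card_range N
  have hf₀mem : f₀ ∈ Ffam (l + 1) := ⟨I₀, fun _ => 1, hcard, fun i _ => Or.inl rfl, rfl⟩
  have hIcard : I₀.card = N := by
    rw [hI₀, Finset.card_image_of_injOn hinj, Finset.card_range]
  have hyI : ∀ i ∈ I₀, y i = 1 := by
    intro i hi
    obtain ⟨k, hk, rfl⟩ := Finset.mem_image.mp hi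
    exact hy_a k (Finset.mem_range.mp hk)
  have hf₀val : fapply f₀ y = ((mseq r:ℝ)^2)⁻¹ * N := by
    rw [hf₀, fapply_smul, fapply_finset_sum, hidx]
    congr 1
    calc ∑ i ∈ I₀, fapply ((1:ℝ) • Finsupp.single i 1) y
        = ∑ i ∈ I₀, y i := by
          refine Finset.sum_congr rfl fun i _ => ?_
          rw [one_smul, fapply_single]
      _ = ∑ i ∈ I₀, (1:ℝ) := Finset.sum_congr rfl hyI
      _ = N := by rw [Finset.sum_const]; simp [hIcard]
  have hcoeffs : ∀ f ∈ ⋃ i, Ffam i, ∀ i, |f i| ≤ 1 := by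
    intro f hf i
    obtain ⟨_, ⟨i', rfl⟩, hf'⟩ := hf
    exact Ffam_coeff_le hf' i
  have hbdd : BddAbove ((fun f => fapply f y) '' ⋃ i, Ffam i) := by
    refine ⟨∑ i ∈ y.support, |y i|, ?_⟩
    rintro z ⟨f, hf, rfl⟩
    exact fapply_le_l1 f y (hcoeffs f hf)
  have hge : ((mseq r:ℝ)^2)⁻¹ * N ≤ sSup ((fun f => fapply f y) '' ⋃ i, Ffam i) := by
    rw [← hf₀val]
    exact le_csSup hbdd ⟨f₀, Set.mem_iUnion.mpr ⟨l+1, hf₀mem⟩, rfl⟩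
  have hBδ : Bbound j < δ * (((mseq r:ℝ)^2)⁻¹ * N) := by
    have hδ0 : δ ≠ 0 := ne_of_gt hδ
    have heq : δ * (((mseq r:ℝ)^2)⁻¹ * (N:ℝ)) = δ * (N:ℝ) / ((mseq r:ℝ))^2 := by
      field_simp
    rw [heq, lt_div_iff₀ hm2]
    have h3 := mul_lt_mul_of_pos_left hl hδ
    calc Bbound j * ((mseq r:ℝ))^2 = δ * (Bbound j / δ * ((mseq r:ℝ))^2) := by
          field_simp
      _ < δ * (N:ℝ) := h3
  calc sSup ((fun f => fapply f y) '' Ffam j) ≤ Bbound j := by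
        apply Real.sSup_le _ (zero_le_one.trans (one_le_Bbound j))
        rintro z ⟨f, hf, rfl⟩
        exact Ffam_fapply_le j y hy_abs f hf
    _ < δ * (((mseq r:ℝ)^2)⁻¹ * N) := hBδ
    _ ≤ δ * sSup ((fun f => fapply f y) '' ⋃ i, Ffam i) :=
        mul_le_mul_of_nonneg_left hge hδ.le
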